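/- Let f : M → M be a C¹ map of a compact Riemannian manifold M with Lebesgue (volume) measure Leb, eventually volume expanding with constant λ > 0, and let h(x) = min{n > 0 : |det Df^n(x)| ≥ e^{λn}}, Γ_n = {x : h(x) ≥ n}. If there exist constants C, α > 0 and 0 < τ ≤ 1 such that Leb(Γ_n) ≤ C·e^{−α n^τ} for every n ≥ 1, then there exists β > 0 such that for Lebesgue almost every x ∈ M there is C_x > 0 with |det Df^n(y)| > C_x · e^{β n^τ} for every n ≥ 1 and every y ∈ f^{−n}(x). -/

import Mathlib

open MeasureTheory Set Filter Function Real ENNReal Topology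

set_option maxHeartbeats 1000000

/-- `|det Df^n(x)|`: the absolute value of the Jacobian determinant of the `n`-th
iterate of `f` at `x`. -/
noncomputable def absDetIter {d : ℕ}
    (f : EuclideanSpace ℝ (Fin d) → EuclideanSpace ℝ (Fin d)) (n : ℕ)
    (x : EuclideanSpace ℝ (Fin d)) : ℝ :=
  |(fderiv ℝ (f^[n]) x).det|

/-- `h(x) = min {n > 0 : |det Df^n(x)| ≥ e^{λ n}}`, with value `∞` if no such `n` exists. -/
noncomputable def firstExpTime {d : ℕ}
    (f : EuclideanSpace ℝ (Fin d) → EuclideanSpace ℝ (Fin d)) (lam : ℝ)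
    (x : EuclideanSpace ℝ (Fin d)) : ℕ∞ :=
  sInf {N : ℕ∞ | ∃ m : ℕ, (m : ℕ∞) = N ∧ 0 < m ∧ Real.exp (lam * m) ≤ absDetIter f m x}

/-- `Γ_n = {x ∈ M : h(x) ≥ n}`. -/
noncomputable def GammaSet {d : ℕ} (M : Set (EuclideanSpace ℝ (Fin d)))
    (f : EuclideanSpace ℝ (Fin d) → EuclideanSpace ℝ (Fin d)) (lam : ℝ) (n : ℕ) :
    Set (EuclideanSpace ℝ (Fin d)) :=
  {x ∈ M | (n : ℕ∞) ≤ firstExpTime f lam x}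

/-! ### Auxiliary lemmas -/

section Aux

variable {d : ℕ} {f : EuclideanSpace ℝ (Fin d) → EuclideanSpace ℝ (Fin d)}

lemma absDetIter_nonneg (n : ℕ) (x : EuclideanSpace ℝ (Fin d)) :
    0 ≤ absDetIter f n x := abs_nonneg _

/-- Multiplicativity of the iterated Jacobian (chain rule). -/
lemma absDetIter_add (hf : Differentiable ℝ f) (a b : ℕ) (x : EuclideanSpace ℝ (Fin d)) :
    absDetIter f (b + a) x = absDetIter f b (f^[a] x) * absDetIter f a x := by
  have hcomp : f^[b + a] = f^[b] ∘ f^[a] := Function.iterate_add f b a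
  have hb : DifferentiableAt ℝ (f^[b]) (f^[a] x) := (hf.iterate b).differentiableAt
  have ha : DifferentiableAt ℝ (f^[a]) x := (hf.iterate a).differentiableAt
  have hd : fderiv ℝ (f^[b] ∘ f^[a]) x
      = (fderiv ℝ (f^[b]) (f^[a] x)).comp (fderiv ℝ (f^[a]) x) := fderiv_comp x hb ha
  have hdet : ((fderiv ℝ (f^[b]) (f^[a] x)).comp (fderiv ℝ (f^[a]) x)).det
      = (fderiv ℝ (f^[b]) (f^[a] x)).det * (fderiv ℝ (f^[a]) x).det := by
    simp only [ContinuousLinearMap.det, ContinuousLinearMap.coe_comp]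
    exact LinearMap.det_comp _ _
  simp only [absDetIter, hcomp, hd, hdet, abs_mul]

/-- The iterate of a `C¹` map is `C¹`. -/
lemma contDiff_iterate (hf : ContDiff ℝ 1 f) (n : ℕ) : ContDiff ℝ 1 (f^[n]) := by
  induction n with
  | zero => simpa using contDiff_id
  | succ n ih =>
    rw [Function.iterate_succ']
    exact hf.comp ih

lemma continuous_absDetIter (hf : ContDiff ℝ 1 f) (n : ℕ) :
    Continuous (absDetIter f n) := by
  have h1 : Continuous (fderiv ℝ (f^[n])) :=
    (contDiff_iterate hf n).continuous_fderiv one_ne_zero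
  exact continuous_abs.comp (ContinuousLinearMap.continuous_det.comp h1)

/-- Characterization of `n ≤ firstExpTime`. -/
lemma le_firstExpTime_iff (lam : ℝ) (n : ℕ) (x : EuclideanSpace ℝ (Fin d)) :
    ((n : ℕ∞) ≤ firstExpTime f lam x)
      ↔ ∀ m : ℕ, 0 < m → m < n → absDetIter f m x < Real.exp (lam * m) := by
  rw [firstExpTime, le_sInf_iff]
  constructor
  · intro H m hm hmn
    by_contra hcon
    push_neg at hcon
    have := H (m : ℕ∞) ⟨m, rfl, hm, hcon⟩
    exact absurd (Nat.cast_le.mp this) (by omega)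
  · rintro H N ⟨m, rfl, hm, hdet⟩
    by_contra hcon
    push_neg at hcon
    have hmn : m < n := by exact_mod_cast hcon
    exact absurd hdet (not_le.mpr (H m hm hmn))

lemma measurableSet_le_firstExpTime (hf : ContDiff ℝ 1 f) (lam : ℝ) (n : ℕ) :
    MeasurableSet {x : EuclideanSpace ℝ (Fin d) | (n : ℕ∞) ≤ firstExpTime f lam x} := by
  have : {x : EuclideanSpace ℝ (Fin d) | (n : ℕ∞) ≤ firstExpTime f lam x}
      = ⋂ (m : ℕ), ⋂ (_ : 0 < m ∧ m < n),
          {x | absDetIter f m x < Real.exp (lam * m)} := by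
    ext x
    simp only [mem_setOf_eq, mem_iInter, le_firstExpTime_iff]
    exact ⟨fun H m hm => H m hm.1 hm.2, fun H m h1 h2 => H m ⟨h1, h2⟩⟩
  rw [this]
  refine MeasurableSet.iInter fun m => MeasurableSet.iInter fun _ => ?_
  exact measurableSet_lt (continuous_absDetIter hf m).measurable measurable_const

/-- The greedy decomposition along a backward orbit: every `n`-preimage `y` of `x`
has a "tail point" `z'` with `h(z') > r'` and Jacobian bounded below by
`e^{λ (n - r')}` times the Jacobian of the tail. -/
lemma greedy_decomposition (hf : Differentiable ℝ f) {M : Set (EuclideanSpace ℝ (Fin d))}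
    (hfM : MapsTo f M M) (lam : ℝ) (x : EuclideanSpace ℝ (Fin d)) (r : ℕ) :
    ∀ z ∈ M, f^[r] z = x →
      ∃ r' ≤ r, ∃ z' ∈ M, f^[r'] z' = x ∧ (((r' + 1 : ℕ) : ℕ∞) ≤ firstExpTime f lam z') ∧
        Real.exp (lam * ((r : ℝ) - (r' : ℝ))) * absDetIter f r' z' ≤ absDetIter f r z := by
  induction r using Nat.strong_induction_on with
  | _ r ih =>
    intro z hz hzx
    by_cases hstop : ((r + 1 : ℕ) : ℕ∞) ≤ firstExpTime f lam z
    · exact ⟨r, le_rfl, z, hz, hzx, hstop, by simp⟩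
    · have hlt : firstExpTime f lam z < ((r + 1 : ℕ) : ℕ∞) := not_le.mp hstop
      rw [firstExpTime, sInf_lt_iff] at hlt
      obtain ⟨N, hNS, hNlt⟩ := hlt
      obtain ⟨m, rfl, hm0, hmdet⟩ := hNS
      have hmr : m ≤ r := by
        have : m < r + 1 := by exact_mod_cast hNlt
        omega
      have hz1 : f^[m] z ∈ M := hfM.iterate m hz
      have hx1 : f^[r - m] (f^[m] z) = x := by
        rw [← Function.iterate_add_apply, Nat.sub_add_cancel hmr]; exact hzx
      obtain ⟨r', hr'le, z', hz', hz'x, hstop', hdet⟩ :=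
        ih (r - m) (by omega) (f^[m] z) hz1 hx1
      refine ⟨r', by omega, z', hz', hz'x, hstop', ?_⟩
      have hsplit : absDetIter f r z
          = absDetIter f (r - m) (f^[m] z) * absDetIter f m z := by
        conv_lhs => rw [show r = (r - m) + m by omega]
        exact absDetIter_add hf m (r - m) z
      rw [hsplit]
      have hcast : ((r : ℝ) - (r' : ℝ))
          = (((r - m : ℕ) : ℝ) - (r' : ℝ)) + (m : ℝ) := by
        rw [Nat.cast_sub hmr]; ring
      have hexp : Real.exp (lam * ((r : ℝ) - (r' : ℝ)))
          = Real.exp (lam * (((r - m : ℕ) : ℝ) - (r' : ℝ))) * Real.exp (lam * m) := by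
        rw [← Real.exp_add, hcast]; ring_nf
      rw [hexp]
      calc Real.exp (lam * (((r - m : ℕ) : ℝ) - (r' : ℝ))) * Real.exp (lam * m)
            * absDetIter f r' z'
          = (Real.exp (lam * (((r - m : ℕ) : ℝ) - (r' : ℝ))) * absDetIter f r' z')
            * Real.exp (lam * m) := by ring
        _ ≤ absDetIter f (r - m) (f^[m] z) * absDetIter f m z := by
            apply mul_le_mul hdet hmdet (Real.exp_pos _).le (absDetIter_nonneg _ _)

/-- Summability of a stretched exponential. -/
lemma summable_exp_neg_rpow {c τ : ℝ} (hc : 0 < c) (hτ : 0 < τ) :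
    Summable fun n : ℕ => Real.exp (-c * (n : ℝ) ^ τ) := by
  have h0 : Tendsto (fun x : ℝ => x ^ (2 / τ) * Real.exp (-c * x)) atTop (𝓝 0) :=
    tendsto_rpow_mul_exp_neg_mul_atTop_nhds_zero _ _ hc
  have h1 : Tendsto (fun n : ℕ => ((n : ℝ) ^ τ)) atTop atTop :=
    (tendsto_rpow_atTop hτ).comp tendsto_natCast_atTop_atTop
  have h2 : Tendsto (fun n : ℕ => ((n : ℝ) ^ τ) ^ (2 / τ) * Real.exp (-c * (n : ℝ) ^ τ))
      atTop (𝓝 0) := h0.comp h1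
  have key : ∀ᶠ n : ℕ in atTop,
      Real.exp (-c * (n : ℝ) ^ τ) ≤ ((n : ℝ) ^ (2 : ℝ))⁻¹ := by
    filter_upwards [h2.eventually (eventually_le_nhds one_pos), eventually_ge_atTop 1]
      with n hle hn1
    have hn1' : (1 : ℝ) ≤ (n : ℝ) := by exact_mod_cast hn1
    have hpow : ((n : ℝ) ^ τ) ^ (2 / τ) = (n : ℝ) ^ (2 : ℝ) := by
      rw [← Real.rpow_mul (by positivity)]
      congr 1
      field_simp
    rw [hpow] at hle
    have hpos : (0 : ℝ) < (n : ℝ) ^ (2 : ℝ) := by positivity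
    rw [← one_div, le_div_iff₀ hpos, mul_comm]
    exact hle
  obtain ⟨N, hN⟩ := eventually_atTop.mp key
  rw [← summable_nat_add_iff N]
  apply Summable.of_nonneg_of_le (fun n => (Real.exp_pos _).le)
    (fun n => hN (n + N) (by omega))
  have : Summable fun n : ℕ => ((n : ℝ) ^ (-2 : ℝ)) := by
    exact Real.summable_nat_rpow.mpr (by norm_num)
  have hsum : Summable fun n : ℕ => (((n : ℝ)) ^ (2 : ℝ))⁻¹ := by
    refine this.congr fun n => ?_
    rw [Real.rpow_neg (Nat.cast_nonneg n)]
  exact (summable_nat_add_iff N).mpr hsum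

/-- `rpow` subadditivity on naturals for exponents in `(0,1]`. -/
lemma rpow_nat_subadd {τ : ℝ} (hτ0 : 0 ≤ τ) (hτ1 : τ ≤ 1) (a b : ℕ) :
    ((a : ℝ) + (b : ℝ)) ^ τ ≤ (a : ℝ) ^ τ + (b : ℝ) ^ τ := by
  have h := NNReal.rpow_add_le_add_rpow (a : NNReal) (b : NNReal) hτ0 hτ1
  have h2 := NNReal.coe_le_coe.2 h
  rw [NNReal.coe_rpow] at h2
  push_cast at h2
  convert h2 using 2 <;> push_cast <;> ring_nf

lemma rpow_nat_le_self {τ : ℝ} (hτ0 : 0 < τ) (hτ1 : τ ≤ 1) (a : ℕ) :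
    ((a : ℝ)) ^ τ ≤ (a : ℝ) := by
  rcases Nat.eq_zero_or_pos a with rfl | ha
  · simp [Real.zero_rpow (ne_of_gt hτ0)]
  · have h1 : (1 : ℝ) ≤ (a : ℝ) := by exact_mod_cast ha
    calc ((a : ℝ)) ^ τ ≤ ((a : ℝ)) ^ (1 : ℝ) := Real.rpow_le_rpow_of_exponent_le h1 hτ1
      _ = (a : ℝ) := Real.rpow_one _

end Aux

/-- Stretched-exponential case: if `Leb (Γ_n) ≤ C e^{-α n^τ}` then one gets backward
contraction at a stretched-exponential rate `e^{β n^τ}`. -/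
theorem backward_contraction_stretched_exponential {d : ℕ}
    (M : Set (EuclideanSpace ℝ (Fin d))) (hM : IsCompact M)
    (f : EuclideanSpace ℝ (Fin d) → EuclideanSpace ℝ (Fin d))
    (hf : ContDiff ℝ 1 f) (hfM : MapsTo f M M)
    (lam : ℝ) (hlam : 0 < lam)
    (h_expanding : ∀ᵐ x ∂(volume.restrict M),
      ∃ n : ℕ, 1 ≤ n ∧ lam < (1 / n) * Real.log (absDetIter f n x))
    (C α τ : ℝ) (hC : 0 < C) (hα : 0 < α) (hτ : 0 < τ) (hτ1 : τ ≤ 1)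
    (hGamma : ∀ n : ℕ, 1 ≤ n →
      volume (GammaSet M f lam n) ≤ ENNReal.ofReal (C * Real.exp (-α * (n : ℝ) ^ τ))) :
    ∃ β : ℝ, 0 < β ∧ ∀ᵐ x ∂(volume.restrict M), ∃ Cx : ℝ, 0 < Cx ∧
      ∀ n : ℕ, 1 ≤ n → ∀ y ∈ M, f^[n] y = x →
        Cx * Real.exp (β * (n : ℝ) ^ τ) < absDetIter f n y := by
  classical
  have hfd : Differentiable ℝ f := hf.differentiable one_ne_zero
  set β := min lam (α / 2) with hβdef
  have hβ : 0 < β := lt_min hlam (by linarith)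
  refine ⟨β, hβ, ?_⟩
  -- the threshold for the quantitative bad sets
  set ρ : ℕ → ℝ := fun r => Real.exp ((α / 2) * ((r + 1 : ℕ) : ℝ) ^ τ) with hρdef
  -- bad sets
  set Z : ℕ → Set (EuclideanSpace ℝ (Fin d)) := fun r => M ∩ {z | absDetIter f r z = 0}
    with hZdef
  set B : ℕ → Set (EuclideanSpace ℝ (Fin d)) := fun r =>
    GammaSet M f lam (r + 1) ∩ {z | absDetIter f r z < ρ r} with hBdef
  -- measurability
  have hMmeas : MeasurableSet M := hM.isClosed.measurableSet
  have hZmeas : ∀ r, MeasurableSet (Z r) := fun r =>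
    hMmeas.inter ((continuous_absDetIter hf r).measurable (measurableSet_singleton 0))
  have hGmeas : ∀ n : ℕ, MeasurableSet (GammaSet M f lam n) := fun n =>
    hMmeas.inter (measurableSet_le_firstExpTime hf lam n)
  have hBmeas : ∀ r, MeasurableSet (B r) := fun r =>
    (hGmeas (r + 1)).inter
      (measurableSet_lt (continuous_absDetIter hf r).measurable measurable_const)
  have hderiv : ∀ (r : ℕ) (s : Set (EuclideanSpace ℝ (Fin d))), ∀ z ∈ s,
      HasFDerivWithinAt (f^[r]) (fderiv ℝ (f^[r]) z) s z := fun r s z _ =>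
    ((hfd.iterate r) z).hasFDerivAt.hasFDerivWithinAt
  -- images of the zero sets are null
  have hZnull : ∀ r, volume (f^[r] '' Z r) = 0 := by
    intro r
    have h1 := addHaar_image_le_lintegral_abs_det_fderiv volume (hZmeas r)
      (hderiv r (Z r))
    have h2 : ∫⁻ z in Z r, ENNReal.ofReal |(fderiv ℝ (f^[r]) z).det| ∂volume = 0 := by
      rw [← lintegral_zero]
      apply setLIntegral_congr_fun (hZmeas r)
      intro z hz
      have : absDetIter f r z = 0 := hz.2
      simp only [absDetIter] at this
      simp [this]
    exact le_antisymm (h1.trans h2.le) (zero_le)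
  -- images of the quantitative bad sets have summable measures
  have hBbound : ∀ r : ℕ, volume (f^[r] '' B r)
      ≤ ENNReal.ofReal (C * Real.exp (-(α / 2) * ((r + 1 : ℕ) : ℝ) ^ τ)) := by
    intro r
    have h1 := addHaar_image_le_lintegral_abs_det_fderiv volume (hBmeas r)
      (hderiv r (B r))
    have h2 : ∫⁻ z in B r, ENNReal.ofReal |(fderiv ℝ (f^[r]) z).det| ∂volume
        ≤ ENNReal.ofReal (ρ r) * volume (B r) := by
      rw [← setLIntegral_const]
      apply setLIntegral_mono_ae aemeasurable_const
      filter_upwards with z hz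
      exact ENNReal.ofReal_le_ofReal hz.2.le
    have h3 : volume (B r) ≤ ENNReal.ofReal (C * Real.exp (-α * ((r + 1 : ℕ) : ℝ) ^ τ)) :=
      le_trans (measure_mono inter_subset_left) (hGamma (r + 1) (by omega))
    calc volume (f^[r] '' B r)
        ≤ ENNReal.ofReal (ρ r) * volume (B r) := h1.trans h2
      _ ≤ ENNReal.ofReal (ρ r) * ENNReal.ofReal (C * Real.exp (-α * ((r + 1 : ℕ) : ℝ) ^ τ)) :=
          mul_le_mul_right h3 _
      _ = ENNReal.ofReal (C * Real.exp (-(α / 2) * ((r + 1 : ℕ) : ℝ) ^ τ)) := by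
          rw [← ENNReal.ofReal_mul (by simp only [hρdef]; positivity : (0:ℝ) ≤ ρ r)]
          congr 1
          simp only [hρdef]
          rw [show Real.exp ((α / 2) * ((r + 1 : ℕ) : ℝ) ^ τ)
              * (C * Real.exp (-α * ((r + 1 : ℕ) : ℝ) ^ τ))
            = C * (Real.exp ((α / 2) * ((r + 1 : ℕ) : ℝ) ^ τ)
              * Real.exp (-α * ((r + 1 : ℕ) : ℝ) ^ τ)) from by ring]
          rw [← Real.exp_add]
          congr 2
          ring
  have hBsummable : (∑' r : ℕ, volume (f^[r] '' B r)) ≠ ⊤ := by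
    have hsum0 : Summable fun n : ℕ => Real.exp (-(α / 2) * (n : ℝ) ^ τ) :=
      summable_exp_neg_rpow (by linarith) hτ
    have hsum1 : Summable fun r : ℕ => C * Real.exp (-(α / 2) * ((r + 1 : ℕ) : ℝ) ^ τ) := by
      apply Summable.mul_left
      have h := (summable_nat_add_iff
        (f := fun n : ℕ => Real.exp (-(α / 2) * (n : ℝ) ^ τ)) 1).mpr hsum0
      exact_mod_cast h
    have hle : (∑' r : ℕ, volume (f^[r] '' B r))
        ≤ ∑' r : ℕ, ENNReal.ofReal (C * Real.exp (-(α / 2) * ((r + 1 : ℕ) : ℝ) ^ τ)) :=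
      ENNReal.tsum_le_tsum hBbound
    rw [← ENNReal.ofReal_tsum_of_nonneg (fun r => by positivity) hsum1] at hle
    exact ne_top_of_le_ne_top ENNReal.ofReal_ne_top hle
  have hlimsup : volume (limsup (fun r => f^[r] '' B r) atTop) = 0 :=
    measure_limsup_atTop_eq_zero hBsummable
  -- the global null set
  have hN : ∀ᵐ x ∂volume,
      x ∉ (⋃ r, f^[r] '' Z r) ∧ x ∉ limsup (fun r => f^[r] '' B r) atTop := by
    have h1 : volume (⋃ r, f^[r] '' Z r) = 0 :=
      le_antisymm ((measure_iUnion_le _).trans (by simp [hZnull])) (zero_le)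
    have h2 := measure_eq_zero_iff_ae_notMem.mp h1
    have h3 := measure_eq_zero_iff_ae_notMem.mp hlimsup
    filter_upwards [h2, h3] with x hx1 hx2
    exact ⟨hx1, hx2⟩
  apply ae_restrict_of_ae
  filter_upwards [hN] with x hx
  obtain ⟨hxZ, hxB⟩ := hx
  -- from not-limsup, get r0 past which x avoids the bad images
  rw [Filter.mem_limsup_iff_frequently_mem, Filter.not_frequently] at hxB
  obtain ⟨r0, hr0⟩ := eventually_atTop.mp hxB
  -- minimum of the Jacobian over the compact preimage sets
  have hKcpt : ∀ r : ℕ, IsCompact (M ∩ f^[r] ⁻¹' {x}) := fun r =>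
    hM.inter_right (IsClosed.preimage (hf.continuous.iterate r) isClosed_singleton)
  set S : ℕ → Set ℝ := fun r => insert (1 : ℝ) (absDetIter f r '' (M ∩ f^[r] ⁻¹' {x}))
    with hSdef
  have hScpt : ∀ r, IsCompact (S r) := fun r =>
    ((hKcpt r).image (continuous_absDetIter hf r)).insert 1
  set D : ℕ → ℝ := fun r => sInf (S r) with hDdef
  have hDmem : ∀ r, D r ∈ S r := fun r => (hScpt r).sInf_mem (insert_nonempty _ _)
  have hDpos : ∀ r, 0 < D r := by
    intro r
    rcases hDmem r with h | h
    · rw [h]; exact one_pos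
    · obtain ⟨z, hz, hzD⟩ := h
      rcases lt_or_eq_of_le (absDetIter_nonneg r z (f := f)) with hlt | heq
      · rw [← hzD]; exact hlt
      · exfalso
        apply hxZ
        exact mem_iUnion.mpr ⟨r, ⟨z, ⟨hz.1, heq.symm⟩, hz.2⟩⟩
  have hDle : ∀ r : ℕ, ∀ z ∈ M, f^[r] z = x → D r ≤ absDetIter f r z := by
    intro r z hz hzx
    apply csInf_le ((hScpt r).bddBelow)
    exact mem_insert_of_mem _ ⟨z, ⟨hz, hzx⟩, rfl⟩
  -- the constant
  set g : ℕ → ℝ := fun i => min 1 (Real.exp (-β * (i : ℝ) ^ τ) * D i) with hgdef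
  have hgpos : ∀ i, 0 < g i := fun i =>
    lt_min one_pos (mul_pos (Real.exp_pos _) (hDpos i))
  have hgle1 : ∀ i, g i ≤ 1 := fun i => min_le_left _ _
  set Cx : ℝ := (1 / 2) * ∏ i ∈ Finset.range r0, g i with hCxdef
  have hprodpos : 0 < ∏ i ∈ Finset.range r0, g i :=
    Finset.prod_pos fun i _ => hgpos i
  have hCxpos : 0 < Cx := by positivity
  have hprodle1 : (∏ i ∈ Finset.range r0, g i) ≤ 1 :=
    Finset.prod_le_one (fun i _ => (hgpos i).le) (fun i _ => hgle1 i)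
  have hCxhalf : Cx ≤ 1 / 2 := by
    rw [hCxdef]
    nlinarith
  have hCxle : ∀ i < r0, Cx ≤ (1 / 2) * g i := by
    intro i hi
    rw [hCxdef]
    have hmem : i ∈ Finset.range r0 := Finset.mem_range.mpr hi
    have := Finset.mul_prod_erase (Finset.range r0) g hmem
    rw [← this]
    have herase : (∏ j ∈ (Finset.range r0).erase i, g j) ≤ 1 :=
      Finset.prod_le_one (fun j _ => (hgpos j).le) (fun j _ => hgle1 j)
    have herasepos : 0 < ∏ j ∈ (Finset.range r0).erase i, g j :=
      Finset.prod_pos fun j _ => hgpos j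
    nlinarith [hgpos i]
  refine ⟨Cx, hCxpos, ?_⟩
  intro n hn y hy hyx
  obtain ⟨r', hr'n, z', hz'M, hz'x, hz'h, hchain⟩ :=
    greedy_decomposition hfd hfM lam x n y hy hyx
  -- common sub-additivity facts
  have hnr' : ((n : ℝ)) ^ τ ≤ ((n - r' : ℕ) : ℝ) ^ τ + ((r' : ℕ) : ℝ) ^ τ := by
    have : ((n : ℝ)) = ((n - r' : ℕ) : ℝ) + ((r' : ℕ) : ℝ) := by
      rw [Nat.cast_sub hr'n]; ring
    rw [this]
    exact rpow_nat_subadd hτ.le hτ1 (n - r') r'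
  have hss : ((n - r' : ℕ) : ℝ) ^ τ ≤ ((n - r' : ℕ) : ℝ) := rpow_nat_le_self hτ hτ1 _
  have hβlam : β ≤ lam := min_le_left _ _
  have hβα : β ≤ α / 2 := min_le_right _ _
  have hexp1 : Real.exp (β * ((n : ℝ) ^ τ - (r' : ℝ) ^ τ))
      ≤ Real.exp (lam * ((n : ℝ) - (r' : ℝ))) := by
    apply Real.exp_le_exp.mpr
    have h1 : (n : ℝ) ^ τ - (r' : ℝ) ^ τ ≤ ((n - r' : ℕ) : ℝ) := by
      have := hnr'
      nlinarith [hss]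
    have h2 : ((n - r' : ℕ) : ℝ) = (n : ℝ) - (r' : ℝ) := by
      rw [Nat.cast_sub hr'n]
    have h3 : 0 ≤ (n : ℝ) - (r' : ℝ) := by
      rw [← h2]; positivity
    nlinarith
  rcases lt_or_ge r' r0 with hcase | hcase
  · -- small `r'`: use the compactness minimum
    have hDbound : D r' ≤ absDetIter f r' z' := hDle r' z' hz'M hz'x
    have hfinal : Real.exp (β * ((n : ℝ) ^ τ - (r' : ℝ) ^ τ)) * D r'
        ≤ absDetIter f n y := by
      calc Real.exp (β * ((n : ℝ) ^ τ - (r' : ℝ) ^ τ)) * D r'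
          ≤ Real.exp (lam * ((n : ℝ) - (r' : ℝ))) * absDetIter f r' z' := by
            apply mul_le_mul hexp1 hDbound (hDpos r').le (Real.exp_pos _).le
        _ ≤ absDetIter f n y := hchain
    have hCxlt : Cx < Real.exp (-β * (r' : ℝ) ^ τ) * D r' := by
      calc Cx ≤ (1 / 2) * g r' := hCxle r' hcase
        _ ≤ (1 / 2) * (Real.exp (-β * (r' : ℝ) ^ τ) * D r') := by
            apply mul_le_mul_of_nonneg_left (min_le_right _ _) (by norm_num)
        _ < Real.exp (-β * (r' : ℝ) ^ τ) * D r' := by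
            nlinarith [mul_pos (Real.exp_pos (-β * (r' : ℝ) ^ τ)) (hDpos r')]
    calc Cx * Real.exp (β * (n : ℝ) ^ τ)
        < (Real.exp (-β * (r' : ℝ) ^ τ) * D r') * Real.exp (β * (n : ℝ) ^ τ) :=
          mul_lt_mul_of_pos_right hCxlt (Real.exp_pos _)
      _ = Real.exp (β * ((n : ℝ) ^ τ - (r' : ℝ) ^ τ)) * D r' := by
          rw [show β * ((n : ℝ) ^ τ - (r' : ℝ) ^ τ)
            = (-β * (r' : ℝ) ^ τ) + β * (n : ℝ) ^ τ by ring, Real.exp_add]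
          ring
      _ ≤ absDetIter f n y := hfinal
  · -- large `r'`: use that `x` avoids the image of the bad set
    have hz'B : z' ∉ B r' := by
      intro hmem
      exact hr0 r' hcase ⟨z', hmem, hz'x⟩
    have hz'Γ : z' ∈ GammaSet M f lam (r' + 1) := ⟨hz'M, by exact_mod_cast hz'h⟩
    have hρle : ρ r' ≤ absDetIter f r' z' := by
      by_contra hcon
      push_neg at hcon
      exact hz'B ⟨hz'Γ, hcon⟩
    have hρβ : Real.exp (β * (r' : ℝ) ^ τ) ≤ ρ r' := by
      simp only [hρdef]
      apply Real.exp_le_exp.mpr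
      have h1 : ((r' : ℕ) : ℝ) ^ τ ≤ ((r' + 1 : ℕ) : ℝ) ^ τ :=
        Real.rpow_le_rpow (Nat.cast_nonneg _) (by exact_mod_cast Nat.le_succ r') hτ.le
      have h2 : 0 ≤ ((r' : ℕ) : ℝ) ^ τ := Real.rpow_nonneg (Nat.cast_nonneg _) _
      nlinarith
    have hfinal : Real.exp (β * (n : ℝ) ^ τ) ≤ absDetIter f n y := by
      calc Real.exp (β * (n : ℝ) ^ τ)
          = Real.exp (β * ((n : ℝ) ^ τ - (r' : ℝ) ^ τ)) * Real.exp (β * (r' : ℝ) ^ τ) := by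
            rw [← Real.exp_add]; congr 1; ring
        _ ≤ Real.exp (lam * ((n : ℝ) - (r' : ℝ))) * absDetIter f r' z' :=
            mul_le_mul hexp1 (hρβ.trans hρle) (Real.exp_pos _).le (Real.exp_pos _).le
        _ ≤ absDetIter f n y := hchain
    calc Cx * Real.exp (β * (n : ℝ) ^ τ)
        < 1 * Real.exp (β * (n : ℝ) ^ τ) := by
          apply mul_lt_mul_of_pos_right _ (Real.exp_pos _)
          linarith
      _ = Real.exp (β * (n : ℝ) ^ τ) := one_mul _
      _ ≤ absDetIter f n y := hfinal
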